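/- For every real number c, cosh(√2 · c) − 1 ≥ 2 · (cosh(c) − 1). -/

import Mathlib

open Real

lemma aux_sinh_sqrt_two (t : ℝ) (ht : 0 ≤ t) :
    Real.sqrt 2 * Real.sinh t ≤ Real.sinh (Real.sqrt 2 * t) := by
  have h2 : (1 : ℝ) ≤ Real.sqrt 2 := by
    rw [show (1:ℝ) = Real.sqrt 1 by simp]
    exact Real.sqrt_le_sqrt (by norm_num)
  have key : MonotoneOn (fun x => Real.sinh (Real.sqrt 2 * x) - Real.sqrt 2 * Real.sinh x)
      (Set.Ici 0) := by
    apply monotoneOn_of_deriv_nonneg (convex_Ici 0)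
    · exact ((Real.continuous_sinh.comp (continuous_const.mul continuous_id)).sub
        (continuous_const.mul Real.continuous_sinh)).continuousOn
    · intro x hx
      exact ((Real.differentiable_sinh.comp ((differentiable_const _).mul differentiable_id)).sub
        ((differentiable_const _).mul Real.differentiable_sinh)).differentiableAt.differentiableWithinAt
    · intro x hx
      rw [interior_Ici, Set.mem_Ioi] at hx
      have hd : HasDerivAt (fun x => Real.sinh (Real.sqrt 2 * x) - Real.sqrt 2 * Real.sinh x)
          (Real.cosh (Real.sqrt 2 * x) * Real.sqrt 2 - Real.sqrt 2 * Real.cosh x) x := by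
        have h1 := (Real.hasDerivAt_sinh (Real.sqrt 2 * x)).comp x
          ((hasDerivAt_id x).const_mul (Real.sqrt 2))
        have h3 := h1.sub ((Real.hasDerivAt_sinh x).const_mul (Real.sqrt 2))
        simp only [mul_one] at h3
        exact h3
      rw [hd.deriv]
      have hc : Real.cosh x ≤ Real.cosh (Real.sqrt 2 * x) := by
        rw [Real.cosh_le_cosh]
        rw [abs_of_nonneg hx.le, abs_of_nonneg (by positivity)]
        nlinarith
      nlinarith [Real.sqrt_nonneg 2]
  have := key (Set.self_mem_Ici (a := (0:ℝ))) (Set.mem_Ici.2 ht) ht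
  simp only [mul_zero, Real.sinh_zero, sub_zero, sub_self] at this
  linarith

/-- For every real `c`, `cosh (√2 * c) - 1 ≥ 2 * (cosh c - 1)`. -/
theorem cosh_sqrt_two_mul_sub_one_ge (c : ℝ) :
    Real.cosh (Real.sqrt 2 * c) - 1 ≥ 2 * (Real.cosh c - 1) := by
  wlog hc : 0 ≤ c with H
  · have h1 := H (-c) (by linarith)
    rw [show Real.sqrt 2 * (-c) = -(Real.sqrt 2 * c) by ring, Real.cosh_neg, Real.cosh_neg] at h1
    exact h1
  -- cosh x = 2 sinh(x/2)^2 + 1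
  have hid : ∀ x : ℝ, Real.cosh x = 2 * Real.sinh (x / 2) ^ 2 + 1 := by
    intro x
    have := Real.cosh_two_mul (x / 2)
    have hsq := Real.cosh_sq (x / 2)
    rw [show 2 * (x / 2) = x by ring] at this
    nlinarith
  have h2 : Real.sqrt 2 * c / 2 = Real.sqrt 2 * (c / 2) := by ring
  rw [hid (Real.sqrt 2 * c), hid c, h2]
  have hs := aux_sinh_sqrt_two (c / 2) (by linarith)
  have hs0 : 0 ≤ Real.sinh (c / 2) := Real.sinh_nonneg_iff.2 (by linarith)
  have hsq2 : Real.sqrt 2 ^ 2 = 2 := Real.sq_sqrt (by norm_num)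
  have hsq : (Real.sqrt 2 * Real.sinh (c / 2)) ^ 2 ≤ Real.sinh (Real.sqrt 2 * (c / 2)) ^ 2 :=
    pow_le_pow_left₀ (by positivity) hs 2
  nlinarith
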